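/- For any vector y ∈ ℝ^n and any β > 0, the inequality -yᵀ · tanh(β·y) ≤ -‖y‖₁ + 0.2785·n/β holds, where tanh is applied componentwise. -/

import Mathlib

private lemma exp_t0_lb : (3.5907 : ℝ) ≤ Real.exp 1.2784 := by
  have h1 : (2.7182818283 : ℝ) < Real.exp 1 := Real.exp_one_gt_d9
  have h2 := Real.sum_le_exp_of_nonneg (show (0:ℝ) ≤ 0.2784 by norm_num) 8
  norm_num [Finset.sum_range_succ, Nat.factorial] at h2
  have hexp : Real.exp 1.2784 = Real.exp 1 * Real.exp 0.2784 := by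
    rw [← Real.exp_add]; norm_num
  rw [hexp]
  nlinarith [Real.exp_pos (0.2784 : ℝ), Real.exp_pos (1 : ℝ)]

private lemma key (t : ℝ) (ht : 0 ≤ t) : t ≤ 0.2785 * (Real.exp t + 1) := by
  have h1 : (3.5907 : ℝ) ≤ Real.exp 1.2784 := exp_t0_lb
  have h2 : (3.5907 : ℝ) * (1 + (t - 1.2784)) ≤ Real.exp t := by
    have he : Real.exp t = Real.exp 1.2784 * Real.exp (t - 1.2784) := by
      rw [← Real.exp_add]; ring_nf
    have h3 : t - 1.2784 + 1 ≤ Real.exp (t - 1.2784) := Real.add_one_le_exp _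
    rcases le_or_gt (1 + (t - 1.2784)) 0 with h | h
    · nlinarith [Real.exp_pos t]
    · nlinarith [Real.exp_pos (t - 1.2784)]
  nlinarith

private lemma tanh_bound (u : ℝ) (hu : 0 ≤ u) : u * (1 - Real.tanh u) ≤ 0.2785 := by
  have hc : 0 < Real.cosh u := Real.cosh_pos u
  have hep : 0 < Real.exp u := Real.exp_pos u
  have hen : 0 < Real.exp (-u) := Real.exp_pos (-u)
  have hprod : Real.exp u * Real.exp (-u) = 1 := by
    rw [← Real.exp_add]; simp
  have h2u : Real.exp (2 * u) = Real.exp u * Real.exp u := by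
    rw [← Real.exp_add]; ring_nf
  have htanh : 1 - Real.tanh u = Real.exp (-u) / Real.cosh u := by
    rw [Real.tanh_eq_sinh_div_cosh, Real.sinh_eq, Real.cosh_eq]
    field_simp
    ring
  have hE : Real.exp (2 * u) + 1 = 2 * Real.exp u * Real.cosh u := by
    rw [Real.cosh_eq, h2u]
    field_simp
    linarith [hprod]
  have hk := key (2 * u) (by linarith)
  rw [htanh, mul_div_assoc']
  rw [div_le_iff₀ hc]
  have h6 : (0 : ℝ) < 2 * Real.exp u := by positivity
  rw [← mul_le_mul_iff_left₀ h6]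
  have h5 : u * Real.exp (-u) * (2 * Real.exp u) = 2 * u := by
    linear_combination 2 * u * hprod
  rw [h5]
  calc 2 * u ≤ 0.2785 * (Real.exp (2 * u) + 1) := hk
    _ = 0.2785 * Real.cosh u * (2 * Real.exp u) := by rw [hE]; ring

private lemma coord_bound (a β : ℝ) (hβ : 0 < β) :
    |a| - a * Real.tanh (β * a) ≤ 0.2785 / β := by
  have hodd : a * Real.tanh (β * a) = |a| * Real.tanh (β * |a|) := by
    rcases abs_cases a with ⟨h1, _⟩ | ⟨h1, _⟩
    · rw [h1]
    · rw [h1]; rw [show β * -a = -(β * a) by ring, Real.tanh_neg]; ring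
  rw [hodd]
  have hb := tanh_bound (β * |a|) (by positivity)
  rw [le_div_iff₀ hβ]
  nlinarith [abs_nonneg a]

theorem vector_tanh_bound (n : ℕ) (y : Fin n → ℝ) (β : ℝ) (hβ : 0 < β) :
    -(∑ i, y i * Real.tanh (β * y i)) ≤ -(∑ i, |y i|) + 0.2785 * n / β := by
  have h : ∀ i : Fin n, |y i| - y i * Real.tanh (β * y i) ≤ 0.2785 / β :=
    fun i => coord_bound (y i) β hβ
  have hsum : ∑ i, (|y i| - y i * Real.tanh (β * y i)) ≤ ∑ _i : Fin n, 0.2785 / β :=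
    Finset.sum_le_sum fun i _ => h i
  simp only [Finset.sum_sub_distrib, Finset.sum_const, Finset.card_univ,
    Fintype.card_fin, nsmul_eq_mul] at hsum
  have : (n : ℝ) * (0.2785 / β) = 0.2785 * n / β := by ring
  linarith [hsum]
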